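/- Let μ be a probability measure on a measurable space and τ ≥ 0 measurable with μ{τ > t} = c·t^{-β}(1+o(1)) as t → ∞, where c > 0 and β ∈ (1,2). Let γ ∈ (β-1, β), so that β - γ ∈ (0,1). Then as u → 0⁺, ∫ τ^{γ+1} e^{-u τ} dμ = C·u^{β-γ-1}(1+o(1)) for some constant C > 0 depending only on c, β, γ; in particular this integral tends to +∞ as u → 0⁺. -/

import Mathlib

open MeasureTheory Filter Topology Set

-- continuity of rpow with positive exponent
lemma cont_rpow {p : ℝ} (hp : 0 < p) : Continuous fun s : ℝ => s ^ p := by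
  rw [continuous_iff_continuousAt]
  intro x
  exact Real.continuousAt_rpow_const x p (Or.inr hp.le)

-- integrability of the scaled Gamma weight
lemma integrableOn_weight {α u : ℝ} (hα : -1 < α) (hu : 0 < u) :
    IntegrableOn (fun s : ℝ => s ^ α * Real.exp (-(u * s))) (Ioi (0:ℝ)) := by
  have h0 : IntegrableOn (fun x : ℝ => Real.exp (-x) * x ^ α) (Ioi (0:ℝ)) := by
    have := Real.GammaIntegral_convergent (s := α + 1) (by linarith)
    simpa using this
  have h1 : IntegrableOn (fun s : ℝ => Real.exp (-(u * s)) * (u * s) ^ α) (Ioi (0:ℝ)) := by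
    have := (integrableOn_Ioi_comp_mul_left_iff
      (fun x : ℝ => Real.exp (-x) * x ^ α) 0 hu).2 (by simpa using h0)
    simpa using this
  have h2 := h1.const_mul ((u : ℝ) ^ α)⁻¹
  apply IntegrableOn.congr_fun h2 ?_ measurableSet_Ioi
  intro s hs
  have hs0 : (0:ℝ) < s := hs
  have : (u * s) ^ α = u ^ α * s ^ α := Real.mul_rpow hu.le hs0.le
  have hu' : (0:ℝ) < u ^ α := Real.rpow_pos_of_pos hu α
  field_simp [this]
  exact this

-- the key limit lemma via dominated convergence
lemma Jlim {S : ℝ → ℝ} (hSm : Measurable S) (hS0 : ∀ t, 0 ≤ S t) (hS1 : ∀ t, S t ≤ 1)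
    {c β : ℝ} (hc : 0 < c) (hβ : 0 < β)
    (htail : ∃ e : ℝ → ℝ, Tendsto e atTop (𝓝 0) ∧
      ∀ᶠ t in atTop, S t = c * t ^ (-β) * (1 + e t))
    {α : ℝ} (hαβ : β - 1 < α) (hα : 0 < α) :
    Tendsto (fun u : ℝ => u ^ (α + 1 - β) * ∫ s in Ioi (0:ℝ),
        s ^ α * Real.exp (-(u * s)) * S s)
      (𝓝[>] (0:ℝ)) (𝓝 (c * Real.Gamma (α + 1 - β))) := by
  obtain ⟨e, he0, heq⟩ := htail
  have he1 : ∀ᶠ t in atTop, e t < 1 := he0.eventually_lt_const one_pos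
  obtain ⟨T₁, hT₁⟩ := eventually_atTop.1 (heq.and he1)
  set T : ℝ := max T₁ 1 with hT
  have hT0 : (0:ℝ) < T := lt_of_lt_of_le one_pos (le_max_right _ _)
  have hTtail : ∀ t, T ≤ t → S t ≤ 2 * c * t ^ (-β) := by
    intro t ht
    obtain ⟨h1, h2⟩ := hT₁ t (le_trans (le_max_left _ _) ht)
    rw [h1]
    have ht0 : (0:ℝ) < t := lt_of_lt_of_le hT0 ht
    have hrp : (0:ℝ) ≤ t ^ (-β) := Real.rpow_nonneg ht0.le _
    nlinarith [mul_nonneg hc.le hrp]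
  set K : ℝ := max (2 * c) (T ^ β) with hK
  have hK0 : 0 ≤ K := le_trans (by positivity) (le_max_left _ _)
  -- the uniform domination
  have hbd : ∀ u : ℝ, 0 < u → ∀ x : ℝ, 0 < x →
      u ^ (-β) * S (x / u) ≤ K * x ^ (-β) := by
    intro u hu x hx
    have hxβ : (0:ℝ) ≤ x ^ (-β) := Real.rpow_nonneg hx.le _
    have huβ : (0:ℝ) < u ^ (-β) := Real.rpow_pos_of_pos hu _
    rcases le_or_gt T (x / u) with h | h
    · have hS2 := hTtail _ h
      have hdiv : (x / u) ^ (-β) = x ^ (-β) / u ^ (-β) := Real.div_rpow hx.le hu.le _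
      have : u ^ (-β) * S (x / u) ≤ u ^ (-β) * (2 * c * (x ^ (-β) / u ^ (-β))) := by
        rw [← hdiv]
        exact mul_le_mul_of_nonneg_left hS2 huβ.le
      calc u ^ (-β) * S (x / u) ≤ u ^ (-β) * (2 * c * (x ^ (-β) / u ^ (-β))) := this
        _ = 2 * c * x ^ (-β) := by field_simp
        _ ≤ K * x ^ (-β) := mul_le_mul_of_nonneg_right (le_max_left _ _) hxβ
    · have hxu : x / T < u := by
        rw [div_lt_iff₀ hT0]
        have := (div_lt_iff₀ hu).1 h
        linarith [this, mul_comm u T]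
      have hxT : (0:ℝ) < x / T := div_pos hx hT0
      have h1 : u ^ (-β) ≤ (x / T) ^ (-β) :=
        Real.rpow_le_rpow_of_nonpos hxT hxu.le (by linarith)
      have h2 : (x / T) ^ (-β) = x ^ (-β) * T ^ β := by
        rw [Real.div_rpow hx.le hT0.le, Real.rpow_neg hT0.le, div_eq_mul_inv, inv_inv]
      have hSle : S (x / u) ≤ 1 := hS1 _
      calc u ^ (-β) * S (x / u) ≤ u ^ (-β) * 1 := mul_le_mul_of_nonneg_left hSle huβ.le
        _ = u ^ (-β) := mul_one _
        _ ≤ x ^ (-β) * T ^ β := by rw [← h2]; exact h1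
        _ ≤ K * x ^ (-β) := by
            rw [mul_comm]
            exact mul_le_mul_of_nonneg_right (le_max_right _ _) hxβ
  -- change of variables
  set G : ℝ → ℝ → ℝ := fun u x => x ^ α * Real.exp (-x) * (u ^ (-β) * S (x / u)) with hG
  have hcv : ∀ u : ℝ, 0 < u →
      u ^ (α + 1 - β) * ∫ s in Ioi (0:ℝ), s ^ α * Real.exp (-(u * s)) * S s
        = ∫ x in Ioi (0:ℝ), G u x := by
    intro u hu
    have h1 := integral_comp_mul_left_Ioi
      (g := fun x => x ^ α * Real.exp (-x) * S (x / u)) 0 hu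
    rw [mul_zero] at h1
    have h2 : EqOn (fun s : ℝ => (u * s) ^ α * Real.exp (-(u * s)) * S (u * s / u))
        (fun s : ℝ => u ^ α * (s ^ α * Real.exp (-(u * s)) * S s)) (Ioi 0) := by
      intro s hs
      have hs0 : (0:ℝ) < s := hs
      simp only [mul_div_cancel_left₀ _ hu.ne', Real.mul_rpow hu.le hs0.le]
      ring
    rw [setIntegral_congr_fun measurableSet_Ioi h2, MeasureTheory.integral_const_mul,
      smul_eq_mul] at h1
    have huα : (0:ℝ) < u ^ α := Real.rpow_pos_of_pos hu _
    have key : (∫ s in Ioi (0:ℝ), s ^ α * Real.exp (-(u * s)) * S s)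
        = (u ^ α)⁻¹ * (u⁻¹ * ∫ x in Ioi (0:ℝ), x ^ α * Real.exp (-x) * S (x / u)) := by
      field_simp at h1 ⊢
      linarith [h1]
    rw [key]
    have hpow : u ^ (α + 1 - β) * ((u ^ α)⁻¹ * u⁻¹) = u ^ (-β) := by
      rw [← Real.rpow_neg hu.le, ← Real.rpow_neg_one u, ← Real.rpow_add hu,
        ← Real.rpow_add hu]
      congr 1; ring
    rw [show u ^ (α + 1 - β) * ((u ^ α)⁻¹ * (u⁻¹ * ∫ x in Ioi (0:ℝ),
        x ^ α * Real.exp (-x) * S (x / u)))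
      = (u ^ (α + 1 - β) * ((u ^ α)⁻¹ * u⁻¹)) * ∫ x in Ioi (0:ℝ),
        x ^ α * Real.exp (-x) * S (x / u) from by ring, hpow,
      ← MeasureTheory.integral_const_mul]
    apply setIntegral_congr_fun measurableSet_Ioi
    intro x _
    simp only [hG]; ring
  -- dominated convergence
  have hdct : Tendsto (fun u : ℝ => ∫ x in Ioi (0:ℝ), G u x) (𝓝[>] (0:ℝ))
      (𝓝 (∫ x in Ioi (0:ℝ), x ^ α * Real.exp (-x) * (c * x ^ (-β)))) := by
    apply tendsto_integral_filter_of_dominated_convergence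
      (bound := fun x => K * (Real.exp (-x) * x ^ (α - β)))
    · filter_upwards with u
      exact ((((Real.continuous_rpow_const hα.le).measurable).mul
        (Real.measurable_exp.comp measurable_neg)).mul
        (measurable_const.mul (hSm.comp (measurable_id.div_const u)))).aestronglyMeasurable
    · filter_upwards [self_mem_nhdsWithin] with u hu
      refine (ae_restrict_iff' measurableSet_Ioi).2 (Eventually.of_forall fun x hx => ?_)
      have hx0 : (0:ℝ) < x := hx
      have hu0 : (0:ℝ) < u := hu
      have hnn : 0 ≤ G u x := by
        apply mul_nonneg (mul_nonneg (Real.rpow_nonneg hx0.le _) (Real.exp_nonneg _))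
        exact mul_nonneg (Real.rpow_nonneg hu0.le _) (hS0 _)
      rw [Real.norm_eq_abs, abs_of_nonneg hnn]
      have hb := hbd u hu0 x hx0
      have : G u x ≤ x ^ α * Real.exp (-x) * (K * x ^ (-β)) := by
        apply mul_le_mul_of_nonneg_left hb
        exact mul_nonneg (Real.rpow_nonneg hx0.le _) (Real.exp_nonneg _)
      refine le_trans this (le_of_eq ?_)
      rw [show α - β = α + (-β) from by ring, Real.rpow_add hx0]
      ring
    · have h := (Real.GammaIntegral_convergent (s := α - β + 1) (by linarith)).const_mul K
      apply IntegrableOn.congr_fun h ?_ measurableSet_Ioi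
      intro x _
      simp only [add_sub_cancel_right]
    · refine (ae_restrict_iff' measurableSet_Ioi).2 (Eventually.of_forall fun x hx => ?_)
      have hx0 : (0:ℝ) < x := hx
      have hxu : Tendsto (fun u : ℝ => x / u) (𝓝[>] (0:ℝ)) atTop := by
        have h := Tendsto.const_mul_atTop hx0 tendsto_inv_nhdsGT_zero
        refine h.congr fun u => ?_
        rw [div_eq_mul_inv]
      have heq2 : ∀ᶠ u in 𝓝[>] (0:ℝ),
          u ^ (-β) * S (x / u) = c * x ^ (-β) * (1 + e (x / u)) := by
        filter_upwards [hxu.eventually heq, self_mem_nhdsWithin] with u hfu hu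
        have hu0 : (0:ℝ) < u := hu
        rw [hfu, Real.div_rpow hx0.le hu0.le]
        have huβ : (0:ℝ) < u ^ (-β) := Real.rpow_pos_of_pos hu0 _
        field_simp
      have hlim2 : Tendsto (fun u : ℝ => c * x ^ (-β) * (1 + e (x / u)))
          (𝓝[>] (0:ℝ)) (𝓝 (c * x ^ (-β))) := by
        have : Tendsto (fun u : ℝ => 1 + e (x / u)) (𝓝[>] (0:ℝ)) (𝓝 1) := by
          have := (he0.comp hxu).const_add 1
          simpa using this
        have h := tendsto_const_nhds (x := c * x ^ (-β))
          (f := 𝓝[>] (0:ℝ)) |>.mul this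
        simpa using h
      have : Tendsto (fun u : ℝ => u ^ (-β) * S (x / u)) (𝓝[>] (0:ℝ))
          (𝓝 (c * x ^ (-β))) := Tendsto.congr' (heq2.mono fun u h => h.symm) hlim2
      exact this.const_mul _
  -- identify limit with Gamma
  have hval : ∫ x in Ioi (0:ℝ), x ^ α * Real.exp (-x) * (c * x ^ (-β))
      = c * Real.Gamma (α + 1 - β) := by
    rw [Real.Gamma_eq_integral (by linarith : (0:ℝ) < α + 1 - β),
      ← MeasureTheory.integral_const_mul]
    apply setIntegral_congr_fun measurableSet_Ioi
    intro x hx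
    have hx0 : (0:ℝ) < x := hx
    show x ^ α * Real.exp (-x) * (c * x ^ (-β)) = c * (Real.exp (-x) * x ^ (α + 1 - β - 1))
    rw [show α + 1 - β - 1 = α + (-β) from by ring, Real.rpow_add hx0]
    ring
  rw [← hval]
  apply Tendsto.congr' ?_ hdct
  filter_upwards [self_mem_nhdsWithin] with u hu
  exact (hcv u hu).symm

-- layer cake in Bochner form
lemma layer {X : Type*} [MeasurableSpace X] (μ : Measure X) [IsProbabilityMeasure μ]
    (τ : X → ℝ) (hτm : Measurable τ) (hτ0 : ∀ x, 0 ≤ τ x)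
    {g : ℝ → ℝ} (hgc : Continuous g) (hgnn : ∀ t, 0 ≤ t → 0 ≤ g t)
    (hgint : IntegrableOn g (Ioi (0:ℝ))) :
    ∫ x, (∫ s in (0:ℝ)..τ x, g s) ∂μ
      = ∫ s in Ioi (0:ℝ), g s * (μ {x | s < τ x}).toReal := by
  have hSm : Measurable fun s : ℝ => (μ {x | s < τ x}).toReal := by
    have hanti : Antitone fun s : ℝ => (μ {x | s < τ x}).toReal := by
      intro a b hab
      exact ENNReal.toReal_mono (measure_ne_top μ _)
        (measure_mono fun x hx => lt_of_le_of_lt hab hx)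
    exact hanti.measurable
  have hlc := lintegral_comp_eq_lintegral_meas_lt_mul μ (f := τ) (g := g)
    (Eventually.of_forall hτ0) hτm.aemeasurable
    (fun t _ => hgc.intervalIntegrable 0 t)
    ((ae_restrict_iff' measurableSet_Ioi).2
      (Eventually.of_forall fun t ht => hgnn t (le_of_lt ht)))
  have hGc : Continuous fun t : ℝ => ∫ s in (0:ℝ)..t, g s :=
    intervalIntegral.continuous_primitive (fun a b => hgc.intervalIntegrable a b) 0
  have hGnn : ∀ x, 0 ≤ ∫ s in (0:ℝ)..τ x, g s := fun x =>
    intervalIntegral.integral_nonneg (hτ0 x) fun s hs => hgnn s hs.1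
  have hL : ∫ x, (∫ s in (0:ℝ)..τ x, g s) ∂μ
      = (∫⁻ x, ENNReal.ofReal (∫ s in (0:ℝ)..τ x, g s) ∂μ).toReal :=
    integral_eq_lintegral_of_nonneg_ae (Eventually.of_forall hGnn)
      ((hGc.measurable.comp hτm).aestronglyMeasurable)
  have hR : ∫ s in Ioi (0:ℝ), g s * (μ {x | s < τ x}).toReal
      = (∫⁻ s in Ioi (0:ℝ), ENNReal.ofReal (g s * (μ {x | s < τ x}).toReal)).toReal :=
    integral_eq_lintegral_of_nonneg_ae
      ((ae_restrict_iff' measurableSet_Ioi).2 (Eventually.of_forall fun t ht =>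
        mul_nonneg (hgnn t ht.le) ENNReal.toReal_nonneg))
      ((hgc.measurable.mul hSm).aestronglyMeasurable)
  have hlint : ∫⁻ s in Ioi (0:ℝ), ENNReal.ofReal (g s * (μ {x | s < τ x}).toReal)
      = ∫⁻ t in Ioi (0:ℝ), μ {a | t < τ a} * ENNReal.ofReal (g t) := by
    apply lintegral_congr_ae
    refine (ae_restrict_iff' measurableSet_Ioi).2 (Eventually.of_forall fun t ht => ?_)
    show ENNReal.ofReal (g t * (μ {x | t < τ x}).toReal) = μ {a | t < τ a} * ENNReal.ofReal (g t)
    rw [ENNReal.ofReal_mul (hgnn t ht.le), ENNReal.ofReal_toReal (measure_ne_top μ _),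
      mul_comm]
  rw [hL, hlc, ← hlint, ← hR]

-- the representation of the Laplace-type integral
lemma laplace_repr {X : Type*} [MeasurableSpace X] (μ : Measure X) [IsProbabilityMeasure μ]
    (τ : X → ℝ) (hτm : Measurable τ) (hτ0 : ∀ x, 0 ≤ τ x)
    {u γ : ℝ} (hu : 0 < u) (hγ : 0 < γ) :
    ∫ x, τ x ^ (γ + 1) * Real.exp (-(u * τ x)) ∂μ
      = (γ + 1) * (∫ s in Ioi (0:ℝ), s ^ γ * Real.exp (-(u * s)) * (μ {x | s < τ x}).toReal)
        - u * ∫ s in Ioi (0:ℝ), s ^ (γ+1) * Real.exp (-(u * s)) * (μ {x | s < τ x}).toReal := by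
  set S : ℝ → ℝ := fun s => (μ {x | s < τ x}).toReal with hSdef
  set g1 : ℝ → ℝ := fun s => (γ + 1) * s ^ γ * Real.exp (-(u * s)) with hg1
  set g2 : ℝ → ℝ := fun s => u * s ^ (γ + 1) * Real.exp (-(u * s)) with hg2
  have hcexp : Continuous fun s : ℝ => Real.exp (-(u * s)) :=
    ((continuous_const.mul continuous_id).neg).rexp
  have hg1c : Continuous g1 := (continuous_const.mul (cont_rpow hγ)).mul hcexp
  have hg2c : Continuous g2 :=
    (continuous_const.mul (cont_rpow (by linarith : (0:ℝ) < γ + 1))).mul hcexp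
  have hg1nn : ∀ t : ℝ, 0 ≤ t → 0 ≤ g1 t := fun t ht =>
    mul_nonneg (mul_nonneg (by linarith) (Real.rpow_nonneg ht _)) (Real.exp_nonneg _)
  have hg2nn : ∀ t : ℝ, 0 ≤ t → 0 ≤ g2 t := fun t ht =>
    mul_nonneg (mul_nonneg hu.le (Real.rpow_nonneg ht _)) (Real.exp_nonneg _)
  have hg1int : IntegrableOn g1 (Ioi (0:ℝ)) := by
    have h := (integrableOn_weight (α := γ) (by linarith) hu).const_mul (γ + 1)
    apply IntegrableOn.congr_fun h ?_ measurableSet_Ioi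
    intro s _; simp only [hg1]; ring
  have hg2int : IntegrableOn g2 (Ioi (0:ℝ)) := by
    have h := (integrableOn_weight (α := γ + 1) (by linarith) hu).const_mul u
    apply IntegrableOn.congr_fun h ?_ measurableSet_Ioi
    intro s _; simp only [hg2]; ring
  -- derivative identity
  have hderiv : ∀ s : ℝ, HasDerivAt (fun s : ℝ => s ^ (γ + 1) * Real.exp (-(u * s)))
      (g1 s - g2 s) s := by
    intro s
    have h1 : HasDerivAt (fun s : ℝ => s ^ (γ + 1)) ((γ + 1) * s ^ γ) s := by
      have := Real.hasDerivAt_rpow_const (x := s) (p := γ + 1)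
        (Or.inr (by linarith : (1:ℝ) ≤ γ + 1))
      simpa [add_sub_cancel_right] using this
    have hlin : HasDerivAt (fun s : ℝ => -(u * s)) (-u) s := by
      exact (((hasDerivAt_id' s).const_mul u).neg).congr_deriv (by ring)
    have h2 : HasDerivAt (fun s : ℝ => Real.exp (-(u * s)))
        (Real.exp (-(u * s)) * (-u)) s := hlin.exp
    have := h1.mul h2
    refine this.congr_deriv ?_
    simp only [hg1, hg2]; ring
  -- FTC identity
  have hftc : ∀ t : ℝ, 0 ≤ t → t ^ (γ + 1) * Real.exp (-(u * t))
      = (∫ s in (0:ℝ)..t, g1 s) - ∫ s in (0:ℝ)..t, g2 s := by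
    intro t ht
    have h := intervalIntegral.integral_eq_sub_of_hasDerivAt
      (f := fun s : ℝ => s ^ (γ + 1) * Real.exp (-(u * s)))
      (f' := fun s => g1 s - g2 s) (fun s _ => hderiv s)
      ((hg1c.sub hg2c).intervalIntegrable 0 t)
    rw [intervalIntegral.integral_sub (hg1c.intervalIntegrable 0 t)
      (hg2c.intervalIntegrable 0 t)] at h
    have h0 : (0:ℝ) ^ (γ + 1) * Real.exp (-(u * 0)) = 0 := by
      rw [Real.zero_rpow (by linarith : γ + 1 ≠ 0)]; ring
    rw [h0, sub_zero] at h
    linarith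
  -- integrability of primitives composed with τ
  have hbound : ∀ g : ℝ → ℝ, Continuous g → (∀ t : ℝ, 0 ≤ t → 0 ≤ g t) →
      IntegrableOn g (Ioi (0:ℝ)) →
      Integrable (fun x => ∫ s in (0:ℝ)..τ x, g s) μ := by
    intro g hgc hgnn hgint
    have hGc : Continuous fun t : ℝ => ∫ s in (0:ℝ)..t, g s :=
      intervalIntegral.continuous_primitive (fun a b => hgc.intervalIntegrable a b) 0
    refine Integrable.mono' (integrable_const (∫ s in Ioi (0:ℝ), g s))
      ((hGc.measurable.comp hτm).aestronglyMeasurable)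
      (Eventually.of_forall fun x => ?_)
    have hnn : 0 ≤ ∫ s in (0:ℝ)..τ x, g s :=
      intervalIntegral.integral_nonneg (hτ0 x) fun s hs => hgnn s hs.1
    rw [Real.norm_eq_abs, abs_of_nonneg hnn]
    rw [intervalIntegral.integral_of_le (hτ0 x)]
    apply setIntegral_mono_set hgint
    · exact (ae_restrict_iff' measurableSet_Ioi).2
        (Eventually.of_forall fun t ht => hgnn t ht.le)
    · exact HasSubset.Subset.eventuallyLE Ioc_subset_Ioi_self
  have hint1 := hbound g1 hg1c hg1nn hg1int
  have hint2 := hbound g2 hg2c hg2nn hg2int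
  have step1 : ∫ x, τ x ^ (γ + 1) * Real.exp (-(u * τ x)) ∂μ
      = ∫ x, ((∫ s in (0:ℝ)..τ x, g1 s) - ∫ s in (0:ℝ)..τ x, g2 s) ∂μ :=
    integral_congr_ae (Eventually.of_forall fun x => hftc (τ x) (hτ0 x))
  rw [step1, integral_sub hint1 hint2,
    layer μ τ hτm hτ0 hg1c hg1nn hg1int, layer μ τ hτm hτ0 hg2c hg2nn hg2int]
  have e1 : (fun s => g1 s * S s) = fun s => (γ + 1) * (s ^ γ * Real.exp (-(u * s)) * S s) := by
    funext s; simp only [hg1]; ring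
  have e2 : (fun s => g2 s * S s) = fun s => u * (s ^ (γ + 1) * Real.exp (-(u * s)) * S s) := by
    funext s; simp only [hg2]; ring
  show (∫ s in Ioi (0:ℝ), g1 s * S s) - ∫ s in Ioi (0:ℝ), g2 s * S s = _
  rw [e1, e2, MeasureTheory.integral_const_mul, MeasureTheory.integral_const_mul]

theorem laplace_asymptotic {X : Type*} [MeasurableSpace X]
    (μ : Measure X) [IsProbabilityMeasure μ]
    (τ : X → ℝ) (hτm : Measurable τ) (hτ0 : ∀ x, 0 ≤ τ x)
    (c β γ : ℝ) (hc : 0 < c) (hβ1 : 1 < β) (hβ2 : β < 2)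
    (hγ1 : β - 1 < γ) (hγ2 : γ < β)
    (htail : ∃ e : ℝ → ℝ, Tendsto e atTop (𝓝 0) ∧
      ∀ᶠ t in atTop, (μ {x | t < τ x}).toReal = c * t ^ (-β) * (1 + e t)) :
    (∃ C : ℝ, 0 < C ∧ ∃ e : ℝ → ℝ, Tendsto e (𝓝[>] (0:ℝ)) (𝓝 0) ∧
      ∀ᶠ u in 𝓝[>] (0:ℝ),
        ∫ x, τ x ^ (γ + 1) * Real.exp (-(u * τ x)) ∂μ
          = C * u ^ (β - γ - 1) * (1 + e u)) ∧
    Tendsto (fun u : ℝ => ∫ x, τ x ^ (γ + 1) * Real.exp (-(u * τ x)) ∂μ)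
      (𝓝[>] (0:ℝ)) atTop := by
  have hSm : Measurable fun s : ℝ => (μ {x | s < τ x}).toReal := by
    have hanti : Antitone fun s : ℝ => (μ {x | s < τ x}).toReal := by
      intro a b hab
      exact ENNReal.toReal_mono (measure_ne_top μ _)
        (measure_mono fun x hx => lt_of_le_of_lt hab hx)
    exact hanti.measurable
  have hS0 : ∀ t : ℝ, 0 ≤ (μ {x | t < τ x}).toReal := fun t => ENNReal.toReal_nonneg
  have hS1 : ∀ t : ℝ, (μ {x | t < τ x}).toReal ≤ 1 := by
    intro t
    have h1 : μ {x | t < τ x} ≤ 1 := prob_le_one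
    have := ENNReal.toReal_mono (by simp) h1
    simpa using this
  have hβ0 : (0:ℝ) < β := by linarith
  have hγ0 : (0:ℝ) < γ := by linarith
  set I : ℝ → ℝ := fun u => ∫ x, τ x ^ (γ + 1) * Real.exp (-(u * τ x)) ∂μ with hI
  have hJ1 := Jlim hSm hS0 hS1 hc hβ0 htail (α := γ) hγ1 hγ0
  have hJ2 := Jlim hSm hS0 hS1 hc hβ0 htail (α := γ + 1) (by linarith) (by linarith)
  set C : ℝ := c * (β * Real.Gamma (γ + 1 - β)) with hC
  have hΓpos : 0 < Real.Gamma (γ + 1 - β) := Real.Gamma_pos_of_pos (by linarith)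
  have hCpos : 0 < C := mul_pos hc (mul_pos hβ0 hΓpos)
  have hΦ : Tendsto (fun u : ℝ => u ^ (γ + 1 - β) * I u) (𝓝[>] (0:ℝ)) (𝓝 C) := by
    have hcomb := (hJ1.const_mul (γ + 1)).sub hJ2
    have hval : (γ + 1) * (c * Real.Gamma (γ + 1 - β)) - c * Real.Gamma (γ + 1 + 1 - β)
        = C := by
      rw [show γ + 1 + 1 - β = (γ + 1 - β) + 1 from by ring,
        Real.Gamma_add_one (by linarith : γ + 1 - β ≠ 0), hC]
      ring
    rw [hval] at hcomb
    apply Tendsto.congr' ?_ hcomb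
    filter_upwards [self_mem_nhdsWithin] with u hu
    have hu0 : (0:ℝ) < u := hu
    rw [hI]
    simp only
    rw [laplace_repr μ τ hτm hτ0 hu0 hγ0]
    rw [show γ + 1 + 1 - β = (γ + 1 - β) + 1 from by ring, Real.rpow_add_one hu0.ne']
    ring
  have hprod : ∀ u : ℝ, 0 < u → u ^ (β - γ - 1) * u ^ (γ + 1 - β) = 1 := by
    intro u hu
    rw [← Real.rpow_add hu, show β - γ - 1 + (γ + 1 - β) = 0 from by ring, Real.rpow_zero]
  constructor
  · refine ⟨C, hCpos, fun u => u ^ (γ + 1 - β) * I u / C - 1, ?_, ?_⟩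
    · have h := (hΦ.div_const C).sub_const 1
      simpa [div_self hCpos.ne'] using h
    · filter_upwards [self_mem_nhdsWithin] with u hu
      have hu0 : (0:ℝ) < u := hu
      have h1 : 1 + (u ^ (γ + 1 - β) * I u / C - 1) = u ^ (γ + 1 - β) * I u / C := by ring
      rw [h1]
      have hC' : C ≠ 0 := hCpos.ne'
      calc I u = (u ^ (β - γ - 1) * u ^ (γ + 1 - β)) * I u := by
            rw [hprod u hu0, one_mul]
        _ = C * u ^ (β - γ - 1) * (u ^ (γ + 1 - β) * I u / C) := by
            field_simp
  · have hpow : Tendsto (fun u : ℝ => u ^ (β - γ - 1)) (𝓝[>] (0:ℝ)) atTop := by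
      have h := (tendsto_rpow_atTop (y := γ + 1 - β) (by linarith)).comp
        tendsto_inv_nhdsGT_zero
      apply Tendsto.congr' ?_ h
      filter_upwards [self_mem_nhdsWithin] with u hu
      have hu0 : (0:ℝ) < u := hu
      show (u⁻¹) ^ (γ + 1 - β) = u ^ (β - γ - 1)
      rw [← Real.rpow_neg_one u, ← Real.rpow_mul hu0.le,
        show (-1 : ℝ) * (γ + 1 - β) = β - γ - 1 from by ring]
    have hmul := Tendsto.pos_mul_atTop hCpos hΦ hpow
    apply Tendsto.congr' ?_ hmul
    filter_upwards [self_mem_nhdsWithin] with u hu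
    have hu0 : (0:ℝ) < u := hu
    show u ^ (γ + 1 - β) * I u * u ^ (β - γ - 1) = I u
    rw [mul_comm (u ^ (γ + 1 - β)) (I u), mul_assoc, mul_comm (u ^ (γ + 1 - β)) _,
      hprod u hu0, mul_one]
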